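/- In H_*(ΛS^n) = Λ(A) ⊗ ℤ[U] for n ≥ 3 odd, with Δ(A∧U^k) = (−1)^k k · U^{k−1} and the coproduct ∨(A∧U^k) = Σ_{j=1}^{k−2}(A∧U^j) ⊗ (A∧U^{k−1−j}), the genus-one operation t = ∧ ∘ (1 ⊗ Δ) ∘ ∨ satisfies t(A∧U^k) = (−1)^k ⌊(k−1)/2⌋ · A∧U^{k−2}, which is nonzero for all k ≥ 3. -/

import Mathlib

/-!
STATEMENT 16: In H_*(ΛSⁿ) = Λ(A) ⊗ ℤ[U] for n ≥ 3 odd, with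
Δ(A∧U^m) = (−1)^m m · U^{m−1} (the BV operator) and coproduct
∨(A∧U^k) = Σ_{j=1}^{k−2} (A∧U^j) ⊗ (A∧U^{k−1−j}), the genus-one operation
t = ∧ ∘ (1 ⊗ Δ) ∘ ∨ satisfies t(A∧U^k) = (−1)^k ⌊(k−1)/2⌋ · A∧U^{k−2},
which is nonzero for all k ≥ 3.

The free ℤ-module H_*(ΛSⁿ) is modelled as `(Bool × ℕ) →₀ ℤ`, where `(true, j)`
is the basis element A∧U^j and `(false, j)` is U^j.  Applying (1 ⊗ Δ) to the
term (A∧U^j) ⊗ (A∧U^{k−1−j}) gives the coefficient (−1)^{k−1−j}(k−1−j) on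
(A∧U^j) ⊗ U^{k−2−j}, and then the algebraic product gives A∧U^{k−2}.
-/

lemma T_eval (n : ℕ) :
    ∑ i ∈ Finset.range n, ((-1 : ℤ) ^ (i + 1) * ((i + 1 : ℕ) : ℤ)) =
      (-1) ^ n * (((n + 1) / 2 : ℕ) : ℤ) := by
  induction n with
  | zero => simp
  | succ n ih =>
    rw [Finset.sum_range_succ, ih]
    rcases Nat.even_or_odd n with ⟨c, rfl⟩ | ⟨c, rfl⟩
    · have h1 : (c + c + 1) / 2 = c := by omega
      have h2 : (c + c + 1 + 1) / 2 = c + 1 := by omega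
      rw [h1, h2, Even.neg_one_pow ⟨c, rfl⟩,
        Odd.neg_one_pow ⟨c, by ring⟩]
      push_cast; ring
    · have h1 : (2 * c + 1 + 1) / 2 = c + 1 := by omega
      have h2 : (2 * c + 1 + 1 + 1) / 2 = c + 1 := by omega
      rw [h1, h2, Odd.neg_one_pow ⟨c, by ring⟩,
        Even.neg_one_pow ⟨c + 1, by ring⟩]
      push_cast; ring

lemma scalar_eval (m : ℕ) :
    ∑ j ∈ Finset.Icc 1 (m + 1), ((-1 : ℤ) ^ (m + 2 - j) * ((m + 2 - j : ℕ) : ℤ)) =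
      (-1) ^ (m + 3) * (((m + 2) / 2 : ℕ) : ℤ) := by
  rw [show Finset.Icc 1 (m + 1) = Finset.Ico 1 (m + 2) from by exact (Finset.Ico_add_one_right_eq_Icc 1 (m + 1)).symm,
    Finset.sum_Ico_eq_sum_range]
  have e : m + 2 - 1 = m + 1 := rfl
  rw [e]
  have : ∀ i ∈ Finset.range (m + 1),
      ((-1 : ℤ) ^ (m + 2 - (1 + i)) * ((m + 2 - (1 + i) : ℕ) : ℤ)) =
        (fun i => (-1 : ℤ) ^ (i + 1) * ((i + 1 : ℕ) : ℤ)) (m + 1 - 1 - i) := by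
    intro i hi
    simp only [Finset.mem_range] at hi
    have h1 : m + 2 - (1 + i) = m + 1 - i := by omega
    have h2 : m + 1 - 1 - i + 1 = m + 1 - i := by omega
    simp only [h1, h2]
  rw [Finset.sum_congr rfl this,
    Finset.sum_range_reflect (fun i => (-1 : ℤ) ^ (i + 1) * ((i + 1 : ℕ) : ℤ)) (m + 1), T_eval]
  have : (-1 : ℤ) ^ (m + 3) = (-1) ^ (m + 1) := by
    rw [pow_add, pow_add]; norm_num
  rw [this]

/-- Basis element of `Λ(A) ⊗ ℤ[U]`. -/
noncomputable def bas (x : Bool × ℕ) : (Bool × ℕ) →₀ ℤ := Finsupp.single x 1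

/-- Algebraic Chas–Sullivan product of basis elements. -/
noncomputable def csMul : Bool × ℕ → Bool × ℕ → (Bool × ℕ) →₀ ℤ
  | (true, _), (true, _) => 0
  | (true, j), (false, l) => bas (true, j + l)
  | (false, j), (true, l) => bas (true, j + l)
  | (false, j), (false, l) => bas (false, j + l)

theorem genus_one_operation_nonzero (n : ℕ) (hn : 3 ≤ n) (hodd : Odd n)
    (k : ℕ) (hk : 3 ≤ k) :
    (∑ j ∈ Finset.Icc 1 (k - 2),
        ((-1 : ℤ) ^ (k - 1 - j) * (k - 1 - j : ℕ)) • csMul (true, j) (false, k - 2 - j)) =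
      ((-1 : ℤ) ^ k * ((k - 1) / 2 : ℕ)) • bas (true, k - 2) ∧
    (∑ j ∈ Finset.Icc 1 (k - 2),
        ((-1 : ℤ) ^ (k - 1 - j) * (k - 1 - j : ℕ)) • csMul (true, j) (false, k - 2 - j)) ≠ 0 := by
  obtain ⟨m, rfl⟩ : ∃ m, k = m + 3 := ⟨k - 3, by omega⟩
  have e2 : m + 3 - 2 = m + 1 := rfl
  have e1 : m + 3 - 1 = m + 2 := rfl
  have hterm : ∀ j ∈ Finset.Icc 1 (m + 1),
      ((-1 : ℤ) ^ (m + 2 - j) * ((m + 2 - j : ℕ) : ℤ)) •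
          csMul (true, j) (false, m + 1 - j) =
        ((-1 : ℤ) ^ (m + 2 - j) * ((m + 2 - j : ℕ) : ℤ)) • bas (true, m + 1) := by
    intro j hj
    simp only [Finset.mem_Icc] at hj
    have h3 : j + (m + 1 - j) = m + 1 := by omega
    show _ • bas (true, j + (m + 1 - j)) = _
    rw [h3]
  have hmain :
      (∑ j ∈ Finset.Icc 1 (m + 3 - 2),
          ((-1 : ℤ) ^ (m + 3 - 1 - j) * ((m + 3 - 1 - j : ℕ) : ℤ)) •
            csMul (true, j) (false, m + 3 - 2 - j)) =
        ((-1 : ℤ) ^ (m + 3) * (((m + 3 - 1) / 2 : ℕ) : ℤ)) • bas (true, m + 3 - 2) := by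
    rw [e2, e1, Finset.sum_congr rfl hterm, ← Finset.sum_smul, scalar_eval]
  refine ⟨hmain, ?_⟩
  rw [hmain]
  have hc : ((-1 : ℤ) ^ (m + 3) * (((m + 3 - 1) / 2 : ℕ) : ℤ)) ≠ 0 := by
    apply mul_ne_zero (pow_ne_zero _ (by norm_num))
    have : (m + 3 - 1) / 2 ≠ 0 := by omega
    exact_mod_cast this
  simp only [bas, Finsupp.smul_single', mul_one]
  exact fun h => hc (Finsupp.single_eq_zero.mp h)
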